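/- The idempotent P = N̄₁⋯N̄ₙ satisfies the fundamental annihilation relations: P·(ρ) = 0 for every covector ρ ∈ V*, and (v)·P = 0 for every vector v ∈ V. -/

import Mathlib

noncomputable section

open CliffordAlgebra

variable (F : Type*) [Field F] (V : Type*) [AddCommGroup V] [Module F V]

/-- The quadratic form `Q[v ⊕ α] = α v` on `W = V ⊕ V*`. -/
def Qf : QuadraticForm F (V × Module.Dual F V) where
  toFun w := w.2 w.1
  toFun_smul a w := by simp [smul_eq_mul, mul_assoc]
  exists_companion' :=
    ⟨LinearMap.mk₂ F (fun w w' => w.2 w'.1 + w'.2 w.1)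
      (fun m m' n => by simp; ring) (fun c m n => by simp; ring)
      (fun m n n' => by simp; ring) (fun c m n => by simp; ring),
     fun w w' => by simp; ring⟩

/-- Image of a vector `v ∈ V` in the Clifford algebra. -/
def ιv (v : V) : CliffordAlgebra (Qf F V) := ι (Qf F V) (v, 0)

/-- Image of a covector `α ∈ V*` in the Clifford algebra. -/
def ιd (α : Module.Dual F V) : CliffordAlgebra (Qf F V) := ι (Qf F V) ((0 : V), α)

variable {n : ℕ} (bV : Module.Basis (Fin n) F V)

/-- The fundamental idempotent `P = N̄₁⋯N̄ₙ` with `N̄ⱼ = (eⱼ)(eʲ)`. -/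
def Pel : CliffordAlgebra (Qf F V) :=
  (List.ofFn fun j : Fin n => ιv F V (bV j) * ιd F V (bV.coord j)).prod

@[simp] lemma Qf_apply (w : V × Module.Dual F V) : Qf F V w = w.2 w.1 := rfl

lemma ιd_anti (α β : Module.Dual F V) :
    ιd F V α * ιd F V β = -(ιd F V β * ιd F V α) := by
  have h := ι_mul_ι_add_swap (Q := Qf F V) ((0 : V), α) ((0 : V), β)
  have hp : QuadraticMap.polar (Qf F V) ((0 : V), α) ((0 : V), β) = 0 := by
    simp [QuadraticMap.polar]
  rw [hp, map_zero] at h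
  exact eq_neg_of_add_eq_zero_left h

lemma ιv_anti (v w : V) :
    ιv F V v * ιv F V w = -(ιv F V w * ιv F V v) := by
  have h := ι_mul_ι_add_swap (Q := Qf F V) (v, (0 : Module.Dual F V)) (w, 0)
  have hp : QuadraticMap.polar (Qf F V) (v, (0 : Module.Dual F V)) (w, 0) = 0 := by
    simp [QuadraticMap.polar]
  rw [hp, map_zero] at h
  exact eq_neg_of_add_eq_zero_left h

lemma ιv_ιd_anti (v : V) (α : Module.Dual F V) (h : α v = 0) :
    ιv F V v * ιd F V α = -(ιd F V α * ιv F V v) := by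
  have h' := ι_mul_ι_add_swap (Q := Qf F V) (v, (0 : Module.Dual F V)) ((0 : V), α)
  have hp : QuadraticMap.polar (Qf F V) (v, (0 : Module.Dual F V)) ((0 : V), α) = 0 := by
    simp [QuadraticMap.polar, h]
  rw [hp, map_zero] at h'
  exact eq_neg_of_add_eq_zero_left h'

set_option linter.unnecessarySimpa false in
lemma ιd_sq (α : Module.Dual F V) : ιd F V α * ιd F V α = 0 := by
  have := ι_sq_scalar (Q := Qf F V) ((0 : V), α)
  simpa [ιd] using this

set_option linter.unnecessarySimpa false in
lemma ιv_sq (v : V) : ιv F V v * ιv F V v = 0 := by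
  have := ι_sq_scalar (Q := Qf F V) (v, (0 : Module.Dual F V))
  simpa [ιv] using this

lemma comm_of_anti {A : Type*} [Ring A] {a x y : A}
    (hx : a * x = -(x * a)) (hy : a * y = -(y * a)) :
    Commute a (x * y) := by
  show a * (x * y) = (x * y) * a
  rw [← mul_assoc, hx, neg_mul, mul_assoc, hy, mul_neg, neg_neg, mul_assoc]

/-- `eʲ` commutes with `N̄ₖ = (eₖ)(eᵏ)` for `k ≠ j`. -/
lemma comm_d (k j : Fin n) (hkj : k ≠ j) :
    Commute (ιd F V (bV.coord j)) (ιv F V (bV k) * ιd F V (bV.coord k)) := by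
  apply comm_of_anti
  · have h : (bV.coord j) (bV k) = 0 := by
      simp [Module.Basis.coord_apply, Finsupp.single_apply, hkj]
    rw [ιv_ιd_anti F V _ _ h, neg_neg]
  · exact (ιd_anti F V _ _)

/-- `(eᵢ)` commutes with `N̄ₖ = (eₖ)(eᵏ)` for `k ≠ i`. -/
lemma comm_v (k i : Fin n) (hki : i ≠ k) :
    Commute (ιv F V (bV i)) (ιv F V (bV k) * ιd F V (bV.coord k)) := by
  apply comm_of_anti
  · exact ιv_anti F V _ _
  · have h : (bV.coord k) (bV i) = 0 := by
      simp [Module.Basis.coord_apply, Finsupp.single_apply, hki]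
    exact ιv_ιd_anti F V _ _ h

lemma key_d (l : List (Fin n)) (j : Fin n) (hj : j ∈ l) :
    (l.map fun k => ιv F V (bV k) * ιd F V (bV.coord k)).prod * ιd F V (bV.coord j)
      = 0 := by
  induction l with
  | nil => simp at hj
  | cons a t ih =>
    rw [List.map_cons, List.prod_cons, mul_assoc]
    by_cases hm : j ∈ t
    · rw [ih hm, mul_zero]
    · have ha : j = a := by
        rcases List.mem_cons.mp hj with h | h
        · exact h
        · exact absurd h hm
      subst ha
      have hc : Commute (ιd F V (bV.coord j))
          ((t.map fun k => ιv F V (bV k) * ιd F V (bV.coord k)).prod) := by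
        apply Commute.list_prod_right
        intro x hx
        rcases List.mem_map.mp hx with ⟨k, hk, rfl⟩
        exact comm_d F V bV k j (fun h => hm (h ▸ hk))
      rw [← hc.eq, ← mul_assoc, mul_assoc (ιv F V (bV j)), ιd_sq, mul_zero, zero_mul]

lemma key_v (l : List (Fin n)) (i : Fin n) (hi : i ∈ l) :
    ιv F V (bV i) * (l.map fun k => ιv F V (bV k) * ιd F V (bV.coord k)).prod
      = 0 := by
  induction l with
  | nil => simp at hi
  | cons a t ih =>
    rw [List.map_cons, List.prod_cons]
    by_cases ha : i = a
    · subst ha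
      rw [← mul_assoc, ← mul_assoc, ιv_sq, zero_mul, zero_mul]
    · have hm : i ∈ t := by
        rcases List.mem_cons.mp hi with h | h
        · exact absurd h ha
        · exact h
      rw [← mul_assoc, (comm_v F V bV a i ha).eq, mul_assoc, ih hm, mul_zero]

/-- `ιd` as a linear map. -/
def ιdL : Module.Dual F V →ₗ[F] CliffordAlgebra (Qf F V) :=
  (ι (Qf F V)).comp (LinearMap.inr F V (Module.Dual F V))

lemma ιd_eq (α : Module.Dual F V) : ιd F V α = ιdL F V α := rfl

/-- `ιv` as a linear map. -/
def ιvL : V →ₗ[F] CliffordAlgebra (Qf F V) :=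
  (ι (Qf F V)).comp (LinearMap.inl F V (Module.Dual F V))

lemma ιv_eq (v : V) : ιv F V v = ιvL F V v := rfl

/-- `P(ρ) = 0` for every covector `ρ` and `(v)P = 0` for every
vector `v`. -/
theorem stmt6 :
    (∀ ρ : Module.Dual F V, Pel F V bV * ιd F V ρ = 0) ∧
    (∀ v : V, ιv F V v * Pel F V bV = 0) := by
  have hP : Pel F V bV
      = ((List.finRange n).map fun k => ιv F V (bV k) * ιd F V (bV.coord k)).prod := by
    rw [Pel, List.ofFn_eq_map]
  constructor
  · intro ρ
    have hρ : ρ = ∑ j, ρ (bV j) • bV.coord j := (bV.sum_dual_apply_smul_coord ρ).symm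
    rw [ιd_eq, hρ, map_sum, Finset.mul_sum]
    apply Finset.sum_eq_zero
    intro j _
    rw [map_smul, mul_smul_comm, ← ιd_eq, hP,
      key_d F V bV _ j (List.mem_finRange j), smul_zero]
  · intro v
    have hv : v = ∑ i, bV.repr v i • bV i := (bV.sum_repr v).symm
    rw [ιv_eq, hv, map_sum, Finset.sum_mul]
    apply Finset.sum_eq_zero
    intro i _
    rw [map_smul, smul_mul_assoc, ← ιv_eq, hP,
      key_v F V bV _ i (List.mem_finRange i), smul_zero]
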